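/- arXiv:2506.23959 — 5 statements merged into one kernel-verified Lean document; each statement's English description precedes it below -/
import Mathlib

section
/- Define two sequences of polynomials p^x_n, p^y_n ∈ ℤ[x,y] by p^x_0 = p^y_0 = 1, p^x_1 = x, p^y_1 = y, and p^x_{n+1} = x·p^y_n − p^x_{n−1}, p^y_{n+1} = y·p^x_n − p^y_{n−1} (with p^x_{−1} = p^y_{−1} = 0). Then for all n ≥ 1, p^x_n·p^y_{n−2} = p^x_{n−1}·p^y_{n−1} − 1 = p^y_n·p^x_{n−2}. -/
/-- The pair of two-coloured quantum integers, with indices shifted by one so that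
`tc x y (n+1) = (p^x_n, p^y_n)`; in particular `tc x y 0 = (p^x_{-1}, p^y_{-1}) = (0,0)`,
`tc x y 1 = (p^x_0, p^y_0) = (1,1)` and `tc x y 2 = (p^x_1, p^y_1) = (x,y)`.
The recurrence is `p^x_{n+1} = x·p^y_n − p^x_{n−1}`, `p^y_{n+1} = y·p^x_n − p^y_{n−1}`. -/
def tc (x y : ℝ) : ℕ → ℝ × ℝ
  | 0 => (0, 0)
  | 1 => (1, 1)
  | n + 2 => (x * (tc x y (n + 1)).2 - (tc x y n).1,
              y * (tc x y (n + 1)).1 - (tc x y n).2)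

/-- `px x y (n+1) = p^x_n`. -/
def px (x y : ℝ) (n : ℕ) : ℝ := (tc x y n).1

/-- `py x y (n+1) = p^y_n`. -/
def py (x y : ℝ) (n : ℕ) : ℝ := (tc x y n).2

lemma px_succ (x y : ℝ) (n : ℕ) :
    px x y (n + 2) = x * py x y (n + 1) - px x y n := rfl

lemma py_succ (x y : ℝ) (n : ℕ) :
    py x y (n + 2) = y * px x y (n + 1) - py x y n := rfl

/-- For all `n ≥ 1`: `p^x_n · p^y_{n−2} = p^x_{n−1} · p^y_{n−1} − 1 = p^y_n · p^x_{n−2}`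
(stated with the shift by one, so `px (n+1)` is `p^x_n` etc.). -/
theorem two_coloured_frieze_rec (x y : ℝ) (n : ℕ) (hn : 1 ≤ n) :
    px x y (n + 1) * py x y (n - 1) = px x y n * py x y n - 1 ∧
    py x y (n + 1) * px x y (n - 1) = px x y n * py x y n - 1 := by
  induction n with
  | zero => omega
  | succ m ih =>
    match m with
    | 0 =>
      norm_num [px, py, tc]
    | Nat.succ k =>
      obtain ⟨h1, h2⟩ := ih (by omega)
      simp only [Nat.succ_eq_add_one, Nat.add_sub_cancel] at *
      simp only [px_succ, py_succ] at *
      exact ⟨by linear_combination h2, by linear_combination h1⟩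
end

section
/- Suppose x₁, x₃, x₄, x₂, y₁, y₃, y₄, y₂ are positive reals satisfying the 2-periodic D_4 frieze equations: x₁y₁ = x₃y₃ = x₄y₄ = x₂ + 1 = y₂ + 1 and x₂y₂ = x₁x₃x₄ + 1 = y₁y₃y₄ + 1. Then x₂ = y₂ = 3, x₁y₁ = x₃y₃ = x₄y₄ = 4, and x₁x₃x₄ = y₁y₃y₄ = 8. -/
/-- The 2-periodic `D₄` frieze equations in positive reals force `x₂ = y₂ = 3`,
`x₁y₁ = x₃y₃ = x₄y₄ = 4` and `x₁x₃x₄ = y₁y₃y₄ = 8`. -/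
theorem D4_frieze (x₁ x₂ x₃ x₄ y₁ y₂ y₃ y₄ : ℝ)
    (hx₁ : 0 < x₁) (hx₂ : 0 < x₂) (hx₃ : 0 < x₃) (hx₄ : 0 < x₄)
    (hy₁ : 0 < y₁) (hy₂ : 0 < y₂) (hy₃ : 0 < y₃) (hy₄ : 0 < y₄)
    (h1 : x₁ * y₁ = x₃ * y₃) (h2 : x₃ * y₃ = x₄ * y₄)
    (h3 : x₄ * y₄ = x₂ + 1) (h4 : x₂ + 1 = y₂ + 1)
    (h5 : x₂ * y₂ = x₁ * x₃ * x₄ + 1) (h6 : x₁ * x₃ * x₄ + 1 = y₁ * y₃ * y₄ + 1) :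
    x₂ = 3 ∧ y₂ = 3 ∧ x₁ * y₁ = 4 ∧ x₃ * y₃ = 4 ∧ x₄ * y₄ = 4 ∧
    x₁ * x₃ * x₄ = 8 ∧ y₁ * y₃ * y₄ = 8 := by
  have hy2 : y₂ = x₂ := by linarith
  have hP : x₁ * x₃ * x₄ = y₁ * y₃ * y₄ := by linarith
  have hsq : (x₁ * x₃ * x₄) * (x₁ * x₃ * x₄) = (x₂ + 1) ^ 3 := by
    calc (x₁ * x₃ * x₄) * (x₁ * x₃ * x₄)
        = (x₁ * x₃ * x₄) * (y₁ * y₃ * y₄) := by rw [hP]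
      _ = (x₁ * y₁) * (x₃ * y₃) * (x₄ * y₄) := by ring
      _ = (x₂ + 1) ^ 3 := by rw [h1, h2, h3]; ring
  have hx2 : x₂ * x₂ = x₁ * x₃ * x₄ + 1 := by rw [← hy2] at h5 ⊢; linarith [h5]
  have hz : (x₂ + 1) ^ 2 * x₂ * (x₂ - 3) = 0 := by
    have : x₁ * x₃ * x₄ = x₂ * x₂ - 1 := by linarith
    rw [this] at hsq; nlinarith [hsq]
  have hx3 : x₂ = 3 := by
    rcases mul_eq_zero.1 hz with h | h
    · rcases mul_eq_zero.1 h with h' | h'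
      · nlinarith [sq_nonneg (x₂ + 1)]
      · linarith
    · linarith
  have hPv : x₁ * x₃ * x₄ = 8 := by nlinarith [hx2, hx3]
  refine ⟨hx3, by linarith, by linarith [h1, h2, h3, hx3], by linarith, by linarith,
    hPv, by linarith⟩
end

section
/- Let m ≥ 1 and let c_0, c_2, …, c_{2m} be positive reals with c_0 = 1 satisfying (c_{2m}² − 1)² = (c_{2m} + 1)²·(c_{2m}·c_{2m−2} + 1) and (c_{2k}² − 1)² = (c_{2k+2}·c_{2k} + 1)·(c_{2k}·c_{2k−2} + 1) for 1 ≤ k ≤ m−1. Then c_{2k} = 2k + 1 for all 0 ≤ k ≤ m. -/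
/-- The equations for the even constant layers of a 2-periodic positive frieze of type
`D_{2m+2}`: here `c k` stands for `c_{2k}`, with `c 0 = 1`. These force `c_{2k} = 2k+1`. -/
theorem Deven_constant_layers (m : ℕ) (hm : 1 ≤ m) (c : ℕ → ℝ)
    (hpos : ∀ k ≤ m, 0 < c k) (h0 : c 0 = 1)
    (htop : ((c m) ^ 2 - 1) ^ 2 = (c m + 1) ^ 2 * (c m * c (m - 1) + 1))
    (hmid : ∀ k, 1 ≤ k → k ≤ m - 1 →
      ((c k) ^ 2 - 1) ^ 2 = (c (k + 1) * c k + 1) * (c k * c (k - 1) + 1)) :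
    ∀ k ≤ m, c k = 2 * k + 1 := by
  -- From the invariant at k, derive the difference equation
  have hstep : ∀ k, 1 ≤ k → k ≤ m →
      c k * c (k-1) + 1 = (c k - 1)^2 → c (k-1) = c k - 2 := by
    intro k hk1 hkm hinv
    have hck : 0 < c k := hpos k hkm
    have h2 : c k * c (k-1) = c k * (c k - 2) := by nlinarith [hinv]
    exact mul_left_cancel₀ (ne_of_gt hck) h2
  -- Invariant by downward induction
  have hinv : ∀ j, j ≤ m - 1 → c (m - j) * c (m - j - 1) + 1 = (c (m - j) - 1)^2 := by
    intro j
    induction j with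
    | zero =>
      intro _
      simp only [Nat.sub_zero]
      have hcm : 0 < c m := hpos m le_rfl
      have h2 : ((c m * c (m-1) + 1) - (c m - 1)^2) * (c m + 1)^2 = 0 := by
        linear_combination -htop
      rcases mul_eq_zero.mp h2 with h | h
      · linarith
      · nlinarith
    | succ j ih =>
      intro hj
      have hj' : j ≤ m - 1 := by omega
      have hIH := ih hj'
      have hk1 : 1 ≤ m - j := by omega
      have hkm : m - j ≤ m := by omega
      have hd : c (m - j - 1) = c (m - j) - 2 := hstep (m - j) hk1 hkm hIH
      set k' := m - j - 1 with hk'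
      have hk'1 : 1 ≤ k' := by omega
      have hk'm1 : k' ≤ m - 1 := by omega
      have heq1 : k' + 1 = m - j := by omega
      have heq2 : m - (j+1) = k' := by omega
      have heq3 : m - (j+1) - 1 = k' - 1 := by omega
      have hmidk := hmid k' hk'1 hk'm1
      rw [heq1] at hmidk
      have hck' : 0 < c k' := hpos k' (by omega)
      have hfac : c (m - j) * c k' + 1 = (c k' + 1)^2 := by
        rw [hd]; ring
      rw [hfac] at hmidk

      rw [heq2]
      have hpos1 : (c k' + 1)^2 > 0 := by positivity
      have h2 : ((c k' * c (k' - 1) + 1) - (c k' - 1)^2) * (c k' + 1)^2 = 0 := by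
        linear_combination -hmidk
      rcases mul_eq_zero.mp h2 with h | h
      · linarith
      · linarith
  -- difference equation for all 1 ≤ k ≤ m
  have hdiff : ∀ k, 1 ≤ k → k ≤ m → c (k-1) = c k - 2 := by
    intro k hk1 hkm
    have hj : m - k ≤ m - 1 := by omega
    have h := hinv (m - k) hj
    have heq : m - (m - k) = k := by omega
    rw [heq] at h
    exact hstep k hk1 hkm h
  -- upward induction
  intro k
  induction k with
  | zero => intro _; simpa using h0
  | succ k ih =>
    intro hk
    have hik := ih (by omega)
    have h := hdiff (k+1) (by omega) hk
    simp only [Nat.add_sub_cancel] at h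
    push_cast
    push_cast at hik
    linarith
end

section
/- Suppose positive reals x₁, y₁, x₃, y₃, …, x_{2m−1}, y_{2m−1} satisfy x_{2k−1}·y_{2k−1} = 4k² and x_{2k−1}·y_{2k+1} = x_{2k+1}·y_{2k−1} = 4k(k+1) for all admissible k. Then x_{2k−1} = k·x₁ and y_{2k−1} = k·y₁ for all 1 ≤ k ≤ m. -/
/-- The odd layers of a 2-periodic positive frieze of type `D_n`, `n` even: here `x k`
stands for `x_{2k−1}` and `y k` for `y_{2k−1}`, for `1 ≤ k ≤ m`. The relations
`x_{2k−1}y_{2k−1} = 4k²` and `x_{2k−1}y_{2k+1} = x_{2k+1}y_{2k−1} = 4k(k+1)` force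
`x_{2k−1} = k·x₁` and `y_{2k−1} = k·y₁`. -/
theorem Deven_odd_layers (m : ℕ) (hm : 1 ≤ m) (x y : ℕ → ℝ)
    (hpos : ∀ k, 1 ≤ k → k ≤ m → 0 < x k ∧ 0 < y k)
    (h1 : ∀ k, 1 ≤ k → k ≤ m → x k * y k = 4 * k ^ 2)
    (h2 : ∀ k, 1 ≤ k → k + 1 ≤ m →
      x k * y (k + 1) = 4 * k * (k + 1) ∧ x (k + 1) * y k = 4 * k * (k + 1)) :
    ∀ k, 1 ≤ k → k ≤ m → x k = k * x 1 ∧ y k = k * y 1 := by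
  intro k
  induction k with
  | zero => omega
  | succ n ih =>
    intro _ hkm
    rcases Nat.eq_zero_or_pos n with hn | hn
    · subst hn; constructor <;> push_cast <;> ring
    · have hnm : n ≤ m := le_trans (Nat.le_succ n) hkm
      obtain ⟨hxn, hyn⟩ := ih hn hnm
      obtain ⟨hxp, hyp⟩ := hpos n hn hnm
      obtain ⟨hxp1, hyp1⟩ := hpos 1 le_rfl hm
      obtain ⟨e1, e2⟩ := h2 n hn hkm
      have hb := h1 1 le_rfl hm
      push_cast at hb
      have hnR : (0:ℝ) < (n:ℝ) := by exact_mod_cast hn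
      constructor
      · have hne : y n ≠ 0 := ne_of_gt hyp
        have : x (n+1) * y n = (((n:ℝ)+1) * x 1) * y n := by
          rw [e2, hyn]; linear_combination (-(n:ℝ)*((n:ℝ)+1)) * hb
        have := mul_right_cancel₀ hne this
        rw [this]; push_cast; ring
      · have hne : x n ≠ 0 := ne_of_gt hxp
        have : x n * y (n+1) = x n * (((n:ℝ)+1) * y 1) := by
          rw [e1, hxn]; linear_combination (-(n:ℝ)*((n:ℝ)+1)) * hb
        have := mul_left_cancel₀ hne this
        rw [this]; push_cast; ring
end

section
/- Let n = 2m+2 be even. The 2-periodic positive real friezes of type D_n form a two-parameter family: the solutions of the reduced system x₁y₁ = 4, x₊y₊ = x₋y₋ = n, x₁x₊x₋ = y₁y₊y₋ in positive reals are exactly parametrized by choosing (x₊, y₊) with x₊y₊ = n and (x₋, y₋) with x₋y₋ = n, with x₁ = 2n/(x₊x₋) and y₁ = 2n/(y₊y₋); moreover these equations imply x₁x₊x₋ = y₁y₊y₋ = 2n. -/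
/-- For `n = 2m+2` even, the reduced system `x₁y₁ = 4`, `x₊y₊ = x₋y₋ = n`,
`x₁x₊x₋ = y₁y₊y₋` in positive reals is exactly parametrized by the choices of
`(x₊, y₊)` with `x₊y₊ = n` and `(x₋, y₋)` with `x₋y₋ = n`, via `x₁ = 2n/(x₊x₋)`,
`y₁ = 2n/(y₊y₋)`; moreover the equations imply `x₁x₊x₋ = y₁y₊y₋ = 2n`. -/
theorem Deven_two_parameter_family (m : ℕ) (hm : 1 ≤ m)
    (x₁ y₁ xp yp xm ym : ℝ)
    (hx₁ : 0 < x₁) (hy₁ : 0 < y₁) (hxp : 0 < xp) (hyp : 0 < yp)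
    (hxm : 0 < xm) (hym : 0 < ym) :
    ((x₁ * y₁ = 4 ∧ xp * yp = (2 * m + 2 : ℝ) ∧ xm * ym = (2 * m + 2 : ℝ) ∧
        x₁ * xp * xm = y₁ * yp * ym) ↔
      (xp * yp = (2 * m + 2 : ℝ) ∧ xm * ym = (2 * m + 2 : ℝ) ∧
        x₁ = 2 * (2 * m + 2 : ℝ) / (xp * xm) ∧ y₁ = 2 * (2 * m + 2 : ℝ) / (yp * ym))) ∧
    ((x₁ * y₁ = 4 ∧ xp * yp = (2 * m + 2 : ℝ) ∧ xm * ym = (2 * m + 2 : ℝ) ∧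
        x₁ * xp * xm = y₁ * yp * ym) →
      x₁ * xp * xm = 2 * (2 * m + 2 : ℝ) ∧ y₁ * yp * ym = 2 * (2 * m + 2 : ℝ)) := by
  have hn : (0:ℝ) < 2 * m + 2 := by positivity
  have key : (x₁ * y₁ = 4 ∧ xp * yp = (2 * m + 2 : ℝ) ∧ xm * ym = (2 * m + 2 : ℝ) ∧
      x₁ * xp * xm = y₁ * yp * ym) →
      x₁ * xp * xm = 2 * (2 * m + 2 : ℝ) ∧ y₁ * yp * ym = 2 * (2 * m + 2 : ℝ) := by
    rintro ⟨h4, hp, hq, he⟩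
    have hPQ : (x₁ * xp * xm) * (y₁ * yp * ym) = 4 * ((2*m+2 : ℝ) * (2*m+2)) := by
      calc (x₁ * xp * xm) * (y₁ * yp * ym)
          = (x₁ * y₁) * ((xp * yp) * (xm * ym)) := by ring
        _ = 4 * ((2*m+2 : ℝ) * (2*m+2)) := by rw [h4, hp, hq]
    have hP : 0 < x₁ * xp * xm := by positivity
    have hPeq : x₁ * xp * xm = 2 * (2 * m + 2 : ℝ) := by
      nlinarith [sq_nonneg (x₁ * xp * xm - 2 * (2*m+2 : ℝ))]
    exact ⟨hPeq, by rw [← he]; exact hPeq⟩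
  refine ⟨⟨fun h => ?_, fun ⟨hp, hq, hx, hy⟩ => ?_⟩, key⟩
  · obtain ⟨hP, hQ⟩ := key h
    obtain ⟨h4, hp, hq, he⟩ := h
    refine ⟨hp, hq, ?_, ?_⟩
    · field_simp; linarith [hP]
    · field_simp; linarith [hQ]
  · have hx' : x₁ * (xp * xm) = 2 * (2*m+2 : ℝ) := by
      rw [hx]; field_simp
    have hy' : y₁ * (yp * ym) = 2 * (2*m+2 : ℝ) := by
      rw [hy]; field_simp
    refine ⟨?_, hp, hq, by nlinarith⟩
    have : (x₁ * y₁) * ((2*m+2 : ℝ) * (2*m+2)) = 4 * ((2*m+2:ℝ) * (2*m+2)) := by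
      calc (x₁ * y₁) * ((2*m+2 : ℝ) * (2*m+2))
          = (x₁ * y₁) * ((xp * yp) * (xm * ym)) := by rw [hp, hq]
        _ = (x₁ * (xp * xm)) * (y₁ * (yp * ym)) := by ring
        _ = (2 * (2*m+2 : ℝ)) * (2 * (2*m+2 : ℝ)) := by rw [hx', hy']
        _ = 4 * ((2*m+2:ℝ) * (2*m+2)) := by ring
    have hnn : ((2*m+2 : ℝ) * (2*m+2)) ≠ 0 := by positivity
    field_simp at this
    nlinarith [this]
end
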